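/- Let G be a finite simple graph with adjacent edges e₁ = v v₁ and e₂ = v v₂ such that e₃ = v₁v₂ is not an edge of G. Let G_{2,3} be the graph obtained from G by removing e₁ and adding e₃, let G₁ be G with e₂ removed, and let G₃ be G with e₁ and e₂ removed and e₃ added. Then X_G = X_{G_{2,3}} + X_{G₁} − X_{G₃}. -/

import Mathlib

open SimpleGraph

/- The chromatic symmetric function of `G`, specialized to the `n` variables
`x_0, …, x_{n-1}`: the sum, over all proper colorings `κ : V → Fin n`, of
`∏_{v} x_{κ v}`.  Two graphs have the same chromatic symmetric function iff
these specializations agree for every `n`. -/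
open scoped Classical in
noncomputable def csf {V : Type*} [Fintype V] (G : SimpleGraph V) (n : ℕ) :
    MvPolynomial (Fin n) ℤ :=
  ∑ κ : V → Fin n,
    if ∀ u w, G.Adj u w → κ u ≠ κ w then ∏ v, MvPolynomial.X (κ v) else 0

set_option maxHeartbeats 1000000 in
/-- Let `e₁ = v v₁` and `e₂ = v v₂` be adjacent edges of `G` with `e₃ = v₁ v₂` not an
edge of `G`.  With `G_{2,3}` obtained from `G` by removing `e₁` and adding `e₃`,
`G₁ = G - e₂`, and `G₃` obtained by removing `e₁, e₂` and adding `e₃`, we have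
`X_G = X_{G_{2,3}} + X_{G₁} - X_{G₃}`. -/
theorem csf_line_erase {V : Type*} [Fintype V] (G : SimpleGraph V)
    (v v₁ v₂ : V) (h₁ : G.Adj v v₁) (h₂ : G.Adj v v₂) (hne : v₁ ≠ v₂)
    (h₃ : ¬ G.Adj v₁ v₂) :
    ∀ n, csf G n =
      csf ((G.deleteEdges {s(v, v₁)}) ⊔ fromEdgeSet {s(v₁, v₂)}) n +
        csf (G.deleteEdges {s(v, v₂)}) n -
        csf ((G.deleteEdges {s(v, v₁), s(v, v₂)}) ⊔ fromEdgeSet {s(v₁, v₂)}) n := by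
  classical
  intro n
  unfold csf
  rw [← Finset.sum_add_distrib, ← Finset.sum_sub_distrib]
  refine Finset.sum_congr rfl fun κ _ => ?_
  set t : MvPolynomial (Fin n) ℤ := ∏ x, MvPolynomial.X (κ x) with ht
  set P₀ : Prop := ∀ u w, G.Adj u w → s(u,w) ≠ s(v,v₁) → s(u,w) ≠ s(v,v₂) → κ u ≠ κ w with hP₀def
  have hne12 : s(v,v₁) ≠ s(v,v₂) := by
    intro h
    rcases Sym2.eq_iff.mp h with ⟨_, h'⟩ | ⟨_, h'⟩
    · exact hne h'
    · exact h₁.ne h'.symm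
  have hA : (∀ u w, G.Adj u w → κ u ≠ κ w) ↔ P₀ ∧ κ v ≠ κ v₁ ∧ κ v ≠ κ v₂ := by
    constructor
    · intro h; exact ⟨fun u w hadj _ _ => h u w hadj, h v v₁ h₁, h v v₂ h₂⟩
    · rintro ⟨hP, ha, hb⟩ u w hadj
      by_cases he1 : s(u,w) = s(v,v₁)
      · rcases Sym2.eq_iff.mp he1 with ⟨rfl, rfl⟩ | ⟨rfl, rfl⟩
        · exact ha
        · exact ha.symm
      · by_cases he2 : s(u,w) = s(v,v₂)
        · rcases Sym2.eq_iff.mp he2 with ⟨rfl, rfl⟩ | ⟨rfl, rfl⟩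
          · exact hb
          · exact hb.symm
        · exact hP u w hadj he1 he2
  have hB : (∀ u w, ((G.deleteEdges {s(v, v₁)}) ⊔ fromEdgeSet {s(v₁, v₂)}).Adj u w → κ u ≠ κ w) ↔
      (P₀ ∧ κ v ≠ κ v₂) ∧ κ v₁ ≠ κ v₂ := by
    simp only [sup_adj, deleteEdges_adj, fromEdgeSet_adj, Set.mem_singleton_iff]
    constructor
    · intro h
      refine ⟨⟨fun u w hadj hne1 _ => h u w (Or.inl ⟨hadj, hne1⟩), ?_⟩, ?_⟩
      · exact h v v₂ (Or.inl ⟨h₂, hne12.symm⟩)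
      · exact h v₁ v₂ (Or.inr ⟨rfl, hne⟩)
    · rintro ⟨⟨hP, hb⟩, hc⟩ u w hadj
      rcases hadj with ⟨hadj, hne1⟩ | ⟨heq, _⟩
      · by_cases he2 : s(u,w) = s(v,v₂)
        · rcases Sym2.eq_iff.mp he2 with ⟨rfl, rfl⟩ | ⟨rfl, rfl⟩
          · exact hb
          · exact hb.symm
        · exact hP u w hadj hne1 he2
      · rcases Sym2.eq_iff.mp heq with ⟨rfl, rfl⟩ | ⟨rfl, rfl⟩
        · exact hc
        · exact hc.symm
  have hC : (∀ u w, (G.deleteEdges {s(v, v₂)}).Adj u w → κ u ≠ κ w) ↔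
      P₀ ∧ κ v ≠ κ v₁ := by
    simp only [deleteEdges_adj, Set.mem_singleton_iff]
    constructor
    · intro h
      exact ⟨fun u w hadj hne1 hne2 => h u w ⟨hadj, hne2⟩, h v v₁ ⟨h₁, hne12⟩⟩
    · rintro ⟨hP, ha⟩ u w ⟨hadj, hne2⟩
      by_cases he1 : s(u,w) = s(v,v₁)
      · rcases Sym2.eq_iff.mp he1 with ⟨rfl, rfl⟩ | ⟨rfl, rfl⟩
        · exact ha
        · exact ha.symm
      · exact hP u w hadj he1 hne2
  have hD : (∀ u w, ((G.deleteEdges {s(v, v₁), s(v, v₂)}) ⊔ fromEdgeSet {s(v₁, v₂)}).Adj u w → κ u ≠ κ w) ↔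
      P₀ ∧ κ v₁ ≠ κ v₂ := by
    simp only [sup_adj, deleteEdges_adj, fromEdgeSet_adj, Set.mem_singleton_iff,
      Set.mem_insert_iff, not_or]
    constructor
    · intro h
      refine ⟨fun u w hadj hne1 hne2 => h u w (Or.inl ⟨hadj, hne1, hne2⟩), ?_⟩
      exact h v₁ v₂ (Or.inr ⟨rfl, hne⟩)
    · rintro ⟨hP, hc⟩ u w hadj
      rcases hadj with ⟨hadj, hne1, hne2⟩ | ⟨heq, _⟩
      · exact hP u w hadj hne1 hne2
      · rcases Sym2.eq_iff.mp heq with ⟨rfl, rfl⟩ | ⟨rfl, rfl⟩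
        · exact hc
        · exact hc.symm
  simp only [hA, hB, hC, hD]
  split_ifs with k1 k2 k3 k4 <;> try ring1
  all_goals (exfalso; clear_value t P₀; clear hA hB hC hD hne12 hP₀def ht h₁ h₂ h₃ hne; grind)
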